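/- There is an absolute constant C such that the following holds. Let H be an undirected graph on n vertices that admits an orientation of its edges in which Σ_{v} (indeg(v) choose 2) = b. Then H has at most C·(n + √(n·b)) edges. -/

import Mathlib

open Finset

/-- **Branching events bound the number of edges.** There is an absolute constant `C` such
that if an undirected graph `H` on `n` vertices admits an orientation of its edges in which
`∑_v (indeg(v) choose 2) = b`, then `H` has at most `C · (n + √(n·b))` edges. -/
theorem edges_le_of_branching_events :
    ∃ C : ℝ, 0 < C ∧
      ∀ (V : Type) [Fintype V] (H : SimpleGraph V) (D : V → V → Prop) (b : ℕ),
        (∀ u v : V, H.Adj u v ↔ (D u v ∨ D v u)) →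
        (∀ u v : V, D u v → ¬ D v u) →
        (∑ v : V, ({u : V | D u v}.ncard).choose 2) = b →
        (H.edgeSet.ncard : ℝ) ≤
          C * ((Fintype.card V : ℝ) + Real.sqrt ((Fintype.card V : ℝ) * (b : ℝ))) := by
  refine ⟨2, by norm_num, ?_⟩
  intro V _ H D b hAdj hAsym hb
  classical
  set d : V → ℕ := fun v => ({u : V | D u v}).ncard with hd
  -- Step 1: the number of edges equals the sum of in-degrees.
  have eEdge : {p : V × V // D p.1 p.2} ≃ H.edgeSet := by
    refine Equiv.ofBijective (fun p => ⟨Sym2.mk p.1.1 p.1.2, (hAdj p.1.1 p.1.2).mpr (Or.inl p.2)⟩) ⟨?_, ?_⟩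
    · rintro ⟨⟨u, v⟩, huv⟩ ⟨⟨u', v'⟩, hu'v'⟩ h
      replace h := Sym2.eq_iff.mp (congrArg Subtype.val h)
      rcases h with ⟨rfl, rfl⟩ | ⟨rfl, rfl⟩
      · rfl
      · exact absurd hu'v' (hAsym _ _ huv)
    · rintro ⟨e, he⟩
      induction e using Sym2.ind with
      | _ u v =>
        rw [SimpleGraph.mem_edgeSet, hAdj] at he
        cases he with
        | inl h => exact ⟨⟨(u, v), h⟩, rfl⟩
        | inr h => exact ⟨⟨(v, u), h⟩, Subtype.ext (Sym2.eq_swap)⟩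
  have eSigma : {p : V × V // D p.1 p.2} ≃ Σ v : V, {u : V // D u v} :=
    { toFun := fun p => ⟨p.1.2, p.1.1, p.2⟩
      invFun := fun x => ⟨(x.2.1, x.1), x.2.2⟩
      left_inv := fun p => rfl
      right_inv := fun x => rfl }
  have key : H.edgeSet.ncard = ∑ v : V, d v := by
    have h1 : Nat.card H.edgeSet = Nat.card (Σ v : V, {u : V // D u v}) :=
      Nat.card_congr (eEdge.symm.trans eSigma)
    rw [← Nat.card_coe_set_eq, h1, Nat.card_eq_fintype_card, Fintype.card_sigma]
    refine Finset.sum_congr rfl fun v _ => ?_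
    have : ({u : V | D u v}).ncard = Fintype.card {u : V // D u v} := by
      rw [← Nat.card_coe_set_eq, Nat.card_eq_fintype_card]; rfl
    exact this.symm
  -- Step 2: the numeric inequality.
  set n : ℕ := Fintype.card V with hn
  set S : ℕ := ∑ v : V, d v with hS
  have hchoose : ∀ m : ℕ, m ^ 2 = 2 * m.choose 2 + m := by
    intro m
    induction m with
    | zero => rfl
    | succ k ih =>
      rw [Nat.choose_succ_succ, Nat.choose_one_right]
      nlinarith [ih]
  have hsumsq : ∑ v : V, (d v) ^ 2 = 2 * b + S := by
    calc ∑ v : V, (d v) ^ 2 = ∑ v : V, (2 * (d v).choose 2 + d v) := by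
          exact Finset.sum_congr rfl fun v _ => hchoose (d v)
      _ = 2 * b + S := by rw [Finset.sum_add_distrib, ← Finset.mul_sum, hb]
  have hCS : ((S : ℝ)) ^ 2 ≤ (n : ℝ) * (2 * (b : ℝ) + (S : ℝ)) := by
    have h1 := sq_sum_le_card_mul_sum_sq (s := (Finset.univ : Finset V))
      (f := fun v => ((d v : ℝ)))
    rw [Finset.card_univ] at h1
    have h2 : ∑ v : V, ((d v : ℝ)) ^ 2 = 2 * (b : ℝ) + (S : ℝ) := by exact_mod_cast hsumsq
    have h3 : (S : ℝ) = ∑ v : V, ((d v : ℝ)) := by push_cast [hS]; rfl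
    rw [h2, ← h3] at h1
    exact h1
  -- conclude
  rw [key]
  set x : ℝ := Real.sqrt ((n : ℝ) * (b : ℝ)) with hx
  have hx0 : 0 ≤ x := Real.sqrt_nonneg _
  have hx2 : x ^ 2 = (n : ℝ) * (b : ℝ) := Real.sq_sqrt (by positivity)
  have hn0 : (0 : ℝ) ≤ n := Nat.cast_nonneg _
  have hS0 : (0 : ℝ) ≤ S := Nat.cast_nonneg _
  by_contra hcon
  push_neg at hcon
  nlinarith [hCS, hx2, sq_nonneg ((S : ℝ) - 2 * (n : ℝ) - 2 * x), mul_nonneg hn0 hx0]
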